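/- Let k be a field, k[x] = k[x_1,...,x_n], let P = (P_1,...,P_l) be a regular sequence of homogeneous polynomials all of degree p, and let Q = (Q_1,...,Q_l) be homogeneous polynomials all of degree q with p > q >= 1. Set R := k[x]/(P-Q) where (P-Q) is the ideal generated by P_1-Q_1, ..., P_l-Q_l, and for d >= 0 let R^(d) be the image in R of the space of polynomials of degree at most d (with R^(-1) = 0). Then for every d >= 0, the composite map phi_d from the space k[x]_d of homogeneous polynomials of degree d, via the quotient map to R^(d) followed by the projection to R^(d)/R^(d-1), is surjective, and its kernel equals (P)_d, the degree-d homogeneous component of the ideal generated by P_1,...,P_l. -/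

import Mathlib

open MvPolynomial Finset

namespace StmtAux
variable {k : Type} [Field k] {n : ℕ}

lemma eq_zero_of_components {x : MvPolynomial (Fin n) k}
    (h : ∀ e, homogeneousComponent e x = 0) : x = 0 := by
  conv_lhs => rw [← sum_homogeneousComponent x]
  simp [h]

lemma comp_mul_homog {g : MvPolynomial (Fin n) k} {a : ℕ} (hg : g.IsHomogeneous a)
    (c : MvPolynomial (Fin n) k) (e : ℕ) :
    homogeneousComponent e (c * g) =
      if a ≤ e then homogeneousComponent (e - a) c * g else 0 := by
  conv_lhs => rw [← sum_homogeneousComponent c, Finset.sum_mul, map_sum]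
  have h1 : ∀ j ∈ Finset.range (c.totalDegree + 1),
      homogeneousComponent e (homogeneousComponent j c * g) =
        if j = e - a ∧ a ≤ e then homogeneousComponent j c * g else 0 := by
    intro j _
    rw [homogeneousComponent_of_mem
      ((mem_homogeneousSubmodule _ _).2 ((homogeneousComponent_isHomogeneous j c).mul hg))]
    by_cases hje : j = e - a ∧ a ≤ e
    · rw [if_pos hje, if_pos (by omega)]
    · rw [if_neg hje, if_neg (by omega)]
  rw [Finset.sum_congr rfl h1]
  by_cases hae : a ≤ e
  · rw [if_pos hae]
    have h2 : ∀ j ∈ Finset.range (c.totalDegree + 1),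
        (if j = e - a ∧ a ≤ e then homogeneousComponent j c * g else 0) =
          if j = e - a then homogeneousComponent j c * g else 0 := by
      intro j _; simp [hae]
    rw [Finset.sum_congr rfl h2, Finset.sum_ite_eq' (Finset.range (c.totalDegree + 1))]
    by_cases hmem : e - a ∈ Finset.range (c.totalDegree + 1)
    · rw [if_pos hmem]
    · rw [if_neg hmem]
      have : homogeneousComponent (e - a) c = 0 :=
        homogeneousComponent_eq_zero _ c (by simp at hmem; omega)
      simp [this]
  · rw [if_neg hae]
    apply Finset.sum_eq_zero
    intro j _
    rw [if_neg (by omega)]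


lemma syzygy {l : ℕ} (P : Fin l → MvPolynomial (Fin n) k)
    (hreg : ∀ i : Fin l, ∀ f : MvPolynomial (Fin n) k,
      f * P i ∈ Ideal.span (P '' {j | j < i}) → f ∈ Ideal.span (P '' {j | j < i}))
    (t : ℕ) (a : Fin l → MvPolynomial (Fin n) k)
    (ha0 : ∀ i : Fin l, t ≤ (i : ℕ) → a i = 0)
    (hs : ∑ i, a i * P i = 0) :
    ∃ w : Fin l → Fin l → MvPolynomial (Fin n) k,
      (∀ i j : Fin l, t ≤ (i : ℕ) ∨ t ≤ (j : ℕ) → w i j = 0) ∧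
      (∀ i, a i = ∑ j, (w i j - w j i) * P j) := by
  induction t generalizing a with
  | zero =>
    refine ⟨0, by simp, fun i => by simp [ha0 i (Nat.zero_le _)]⟩
  | succ t ih =>
    by_cases htl : t < l
    · set it : Fin l := ⟨t, htl⟩ with hit
      have hitval : (it : ℕ) = t := rfl
      have hmem : a it * P it ∈ Ideal.span (P '' {j | j < it}) := by
        have h0 : a it * P it + ∑ i ∈ Finset.univ.erase it, a i * P i = 0 := by
          rw [Finset.add_sum_erase Finset.univ (fun i => a i * P i) (Finset.mem_univ it), hs]
        have h1 : a it * P it = ∑ i ∈ Finset.univ.erase it, -(a i * P i) := by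
          rw [Finset.sum_neg_distrib]
          linear_combination h0
        rw [h1]
        apply Ideal.sum_mem
        intro i hi
        have hne : i ≠ it := Finset.ne_of_mem_erase hi
        by_cases hlt : i < it
        · exact neg_mem (Ideal.mul_mem_left _ _ (Ideal.subset_span ⟨i, hlt, rfl⟩))
        · have : a i = 0 := ha0 i (by
            have h2 : ¬ ((i : ℕ) < t) := fun hc => hlt hc
            have h3 : (i : ℕ) ≠ t := fun hc => hne (Fin.ext hc)
            omega)
          simp [this]
      have hait : a it ∈ Ideal.span (P '' {j | j < it}) := hreg it (a it) hmem
      set Pb : Fin l → MvPolynomial (Fin n) k := fun j => if j < it then P j else 0 with hPb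
      have hsub : P '' {j | j < it} ⊆ Set.range Pb := by
        rintro x ⟨j, hj, rfl⟩
        exact ⟨j, if_pos hj⟩
      have hait2 : a it ∈ Ideal.span (Set.range Pb) :=
        Ideal.span_mono hsub hait
      rw [Ideal.mem_span_range_iff_exists_fun] at hait2
      obtain ⟨b1, hb1⟩ := hait2
      set b : Fin l → MvPolynomial (Fin n) k := fun j => if j < it then b1 j else 0 with hbdef
      have hbz : ∀ j : Fin l, ¬ j < it → b j = 0 := by
        intro j hj; simp [hbdef, if_neg hj]
      have hb : ∑ j, b j * P j = a it := by
        rw [← hb1]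
        apply Finset.sum_congr rfl
        intro j _
        by_cases hj : j < it
        · simp [hbdef, hPb, if_pos hj]
        · simp [hbdef, hPb, if_neg hj]
      set a' : Fin l → MvPolynomial (Fin n) k :=
        fun i => if i < it then a i + b i * P it else 0 with ha'def
      have hs' : ∑ i, a' i * P i = 0 := by
        have hpt : ∀ i : Fin l, a' i * P i
            = a i * P i + b i * P i * P it - (if i = it then a it * P it else 0) := by
          intro i
          rcases lt_trichotomy i it with h | h | h
          · rw [ha'def]; simp only [if_pos h, if_neg (ne_of_lt h)]; ring
          · rw [ha'def]; simp only [h, lt_self_iff_false, if_neg, if_pos rfl, not_false_iff]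
            rw [hbz it (lt_irrefl it)]
            simp
          · have hai : a i = 0 := ha0 i (by
              have h4 : t < (i : ℕ) := h
              omega)
            rw [ha'def]; simp only [if_neg (not_lt_of_gt h), if_neg (ne_of_gt h)]
            rw [hai, hbz i (not_lt_of_gt h)]
            ring
        rw [Finset.sum_congr rfl (fun i _ => hpt i)]
        rw [Finset.sum_sub_distrib, Finset.sum_add_distrib, hs,
          Finset.sum_ite_eq' Finset.univ it, if_pos (Finset.mem_univ it)]
        have h5 : ∑ i, b i * P i * P it = a it * P it := by
          rw [← Finset.sum_mul, hb]
        rw [h5]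
        ring
      have ha0' : ∀ i : Fin l, t ≤ (i : ℕ) → a' i = 0 := by
        intro i hi
        rw [ha'def]
        exact if_neg (by intro hc; have h6 : (i:ℕ) < t := hc; omega)
      obtain ⟨w', hw'0, hw'⟩ := ih a' ha0' hs'
      refine ⟨fun i j => w' i j + (if i = it then b j else 0), ?_, ?_⟩
      · intro i j hij
        show w' i j + (if i = it then b j else 0) = 0
        rcases hij with hi | hj
        · rw [hw'0 i j (Or.inl (by omega)),
            if_neg (by intro hc; rw [hc, hitval] at hi; omega)]
          ring
        · rw [hw'0 i j (Or.inr (by omega))]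
          have hbj : b j = 0 := hbz j (by intro hc; have h7 : (j:ℕ) < t := hc; omega)
          split <;> simp [hbj]
      · intro i
        have expand : ∀ j : Fin l,
            ((w' i j + (if i = it then b j else 0)) - (w' j i + (if j = it then b i else 0))) * P j
            = (w' i j - w' j i) * P j + (if i = it then b j * P j else 0)
              - (if j = it then b i * P j else 0) := by
          intro j
          split <;> split <;> ring
        show a i = ∑ j, ((w' i j + (if i = it then b j else 0))
            - (w' j i + (if j = it then b i else 0))) * P j
        rw [Finset.sum_congr rfl (fun j _ => expand j)]
        rw [Finset.sum_sub_distrib, Finset.sum_add_distrib]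
        rw [Finset.sum_ite_eq' Finset.univ it, if_pos (Finset.mem_univ it)]
        have hsum2 : (∑ j, if i = it then b j * P j else 0) = if i = it then a it else 0 := by
          split
          · rw [hb]
          · simp
        rw [hsum2, ← hw' i]
        rcases lt_trichotomy i it with h | h | h
        · rw [ha'def]; simp only [if_pos h, if_neg (ne_of_lt h)]; ring
        · rw [ha'def]; simp only [h, lt_self_iff_false, if_neg, if_pos rfl, not_false_iff]
          rw [hbz it (lt_irrefl it)]
          simp
        · have hai : a i = 0 := ha0 i (by
            have h8 : t < (i : ℕ) := h
            omega)
          rw [ha'def]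
          simp only [if_neg (not_lt_of_gt h), if_neg (ne_of_gt h)]
          rw [hai, hbz i (not_lt_of_gt h)]
          ring
    · obtain ⟨w, hw0, hw⟩ := ih a (fun i hi => ha0 i (by have := i.isLt; omega)) hs
      exact ⟨w, fun i j hij => hw0 i j (by omega), hw⟩


/-- reindexing identity for "antisymmetrized" double sums -/
lemma antisym_sum {l : ℕ} (w : Fin l → Fin l → MvPolynomial (Fin n) k)
    (A B : Fin l → MvPolynomial (Fin n) k) :
    ∑ i, ∑ j, (w i j - w j i) * A j * B i
      = - ∑ i, ∑ j, (w i j - w j i) * B j * A i := by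
  rw [Finset.sum_comm]
  rw [← Finset.sum_neg_distrib]
  apply Finset.sum_congr rfl
  intro j _
  rw [← Finset.sum_neg_distrib]
  apply Finset.sum_congr rfl
  intro i _
  ring

lemma antisym_sum_self {l : ℕ} (w : Fin l → Fin l → MvPolynomial (Fin n) k)
    (A : Fin l → MvPolynomial (Fin n) k) :
    ∑ i, ∑ j, (w i j - w j i) * A j * A i = 0 := by
  have h : ∑ i, ∑ j, w i j * A j * A i = ∑ i, ∑ j, w j i * A j * A i := by
    rw [Finset.sum_comm]
    apply Finset.sum_congr rfl; intro i _
    apply Finset.sum_congr rfl; intro j _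
    ring
  have : ∑ i, ∑ j, (w i j - w j i) * A j * A i
      = (∑ i, ∑ j, w i j * A j * A i) - ∑ i, ∑ j, w j i * A j * A i := by
    rw [← Finset.sum_sub_distrib]
    apply Finset.sum_congr rfl; intro i _
    rw [← Finset.sum_sub_distrib]
    apply Finset.sum_congr rfl; intro j _
    ring
  rw [this, h, sub_self]

lemma desc {l p q d : ℕ} (hq : 1 ≤ q) (hpq : q < p)
    (P Q : Fin l → MvPolynomial (Fin n) k)
    (hP : ∀ i, (P i).IsHomogeneous p) (hQ : ∀ i, (Q i).IsHomogeneous q)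
    (hreg : ∀ i : Fin l, ∀ f : MvPolynomial (Fin n) k,
      f * P i ∈ Ideal.span (P '' {j | j < i}) → f ∈ Ideal.span (P '' {j | j < i}))
    (f : MvPolynomial (Fin n) k) (hf : f.IsHomogeneous d)
    (N : ℕ) :
    ∀ c : Fin l → MvPolynomial (Fin n) k, ∀ g : MvPolynomial (Fin n) k,
      (∀ i : Fin l, ∀ e, N ≤ e → homogeneousComponent e (c i) = 0) →
      (∀ e, d ≤ e → homogeneousComponent e g = 0) →
      f = g + ∑ i, c i * (P i - Q i) →
      f ∈ Ideal.span (Set.range P) := by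
  induction N with
  | zero =>
    intro c g hc hg heq
    have hc0 : ∀ i, c i = 0 := fun i => eq_zero_of_components (fun e => hc i e (Nat.zero_le _))
    have hgf : f = g := by
      rw [heq]
      simp [hc0]
    have : f = 0 := by
      have h1 : homogeneousComponent d f = f :=
        (homogeneousComponent_of_mem ((mem_homogeneousSubmodule _ _).2 hf)).trans (if_pos rfl)
      rw [← h1, hgf, hg d le_rfl]
    rw [this]; exact zero_mem _
  | succ N ih =>
    intro c g hc hg heq
    by_cases hcase : N + p ≤ d
    · -- extract degree-d component
      have hcomp := congrArg (homogeneousComponent d) heq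
      have h1 : homogeneousComponent d f = f :=
        (homogeneousComponent_of_mem ((mem_homogeneousSubmodule _ _).2 hf)).trans (if_pos rfl)
      rw [h1, map_add, hg d le_rfl, map_sum, zero_add] at hcomp
      have h2 : ∀ i : Fin l, homogeneousComponent d (c i * (P i - Q i))
          = homogeneousComponent (d - p) (c i) * P i := by
        intro i
        rw [mul_sub, map_sub, comp_mul_homog (hP i), comp_mul_homog (hQ i)]
        rw [if_pos (show p ≤ d by omega), if_pos (show q ≤ d by omega)]
        rw [hc i (d - q) (show N + 1 ≤ d - q by omega), zero_mul, sub_zero]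
      rw [Finset.sum_congr rfl (fun i _ => h2 i)] at hcomp
      rw [hcomp]
      exact Ideal.sum_mem _ fun i _ =>
        Ideal.mul_mem_left _ _ (Ideal.subset_span (Set.mem_range_self i))
    · -- top-degree cancellation and syzygy step
      push_neg at hcase
      set E : Fin l → MvPolynomial (Fin n) k := fun i => homogeneousComponent N (c i) with hE
      have hsyz : ∑ i, E i * P i = 0 := by
        have hcomp := congrArg (homogeneousComponent (N + p)) heq
        have h1 : homogeneousComponent (N + p) f = 0 := by
          rw [homogeneousComponent_of_mem ((mem_homogeneousSubmodule _ _).2 hf),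
            if_neg (by omega)]
        rw [h1, map_add, hg (N + p) (by omega), map_sum, zero_add] at hcomp
        have h2 : ∀ i : Fin l, homogeneousComponent (N + p) (c i * (P i - Q i))
            = E i * P i := by
          intro i
          rw [mul_sub, map_sub, comp_mul_homog (hP i), comp_mul_homog (hQ i)]
          rw [if_pos (show p ≤ N + p by omega), if_pos (show q ≤ N + p by omega)]
          rw [hc i (N + p - q) (show N + 1 ≤ N + p - q by omega), zero_mul, sub_zero,
            Nat.add_sub_cancel]
        rw [Finset.sum_congr rfl (fun i _ => h2 i)] at hcomp
        exact hcomp.symm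
      obtain ⟨w, hw0, hw⟩ := syzygy P hreg l E
        (fun i hi => absurd i.isLt (by omega)) hsyz
      -- refine w to homogeneous degree N - p pieces
      have key : ∃ w2 : Fin l → Fin l → MvPolynomial (Fin n) k,
          (∀ i j, (w2 i j).IsHomogeneous (N - p)) ∧
          (∀ i, E i = ∑ j, (w2 i j - w2 j i) * P j) ∧
          (p ≤ N ∨ ∀ i j, w2 i j = 0) := by
        by_cases hpN : p ≤ N
        · refine ⟨fun i j => homogeneousComponent (N - p) (w i j),
            fun i j => homogeneousComponent_isHomogeneous _ _, fun i => ?_, Or.inl hpN⟩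
          have hcomp := congrArg (homogeneousComponent N) (hw i)
          have h1 : homogeneousComponent N (E i) = E i :=
            (homogeneousComponent_of_mem ((mem_homogeneousSubmodule _ _).2
              (homogeneousComponent_isHomogeneous N (c i)))).trans (if_pos rfl)
          rw [h1, map_sum] at hcomp
          rw [hcomp]
          apply Finset.sum_congr rfl
          intro j _
          rw [comp_mul_homog (hP j), if_pos (by omega : p ≤ N), map_sub]
        · refine ⟨0, fun i j => isHomogeneous_zero _ _ _, fun i => ?_, Or.inr fun i j => rfl⟩
          have hcomp := congrArg (homogeneousComponent N) (hw i)
          have h1 : homogeneousComponent N (E i) = E i :=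
            (homogeneousComponent_of_mem ((mem_homogeneousSubmodule _ _).2
              (homogeneousComponent_isHomogeneous N (c i)))).trans (if_pos rfl)
          rw [h1, map_sum] at hcomp
          have h2 : ∀ j ∈ Finset.univ, homogeneousComponent N ((w i j - w j i) * P j) = 0 := by
            intro j _
            rw [comp_mul_homog (hP j), if_neg (by omega)]
          rw [Finset.sum_congr rfl h2] at hcomp
          simp only [Finset.sum_const_zero] at hcomp
          simp [hcomp]
      obtain ⟨w2, hw2hom, hw2eq, hw2alt⟩ := key
      -- component bound for the new coefficients
      set c' : Fin l → MvPolynomial (Fin n) k :=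
        fun i => (c i - E i) + ∑ j, (w2 i j - w2 j i) * Q j with hc'def
      have hw2Q : ∀ i j r : Fin l, ∀ e, N ≤ e → homogeneousComponent e (w2 i j * Q r) = 0 := by
        intro i j r e he
        rcases hw2alt with hpN | hz
        · rw [homogeneousComponent_of_mem ((mem_homogeneousSubmodule _ _).2
            ((hw2hom i j).mul (hQ r))), if_neg (by omega)]
        · rw [hz i j, zero_mul, map_zero]
      have hc' : ∀ i : Fin l, ∀ e, N ≤ e → homogeneousComponent e (c' i) = 0 := by
        intro i e he
        show homogeneousComponent e ((c i - E i) + ∑ j, (w2 i j - w2 j i) * Q j) = 0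
        have h1 : homogeneousComponent e (c i) - homogeneousComponent e (E i) = 0 := by
          rcases Nat.eq_or_lt_of_le he with he' | he'
          · subst he'
            rw [(homogeneousComponent_of_mem ((mem_homogeneousSubmodule _ _).2
              (homogeneousComponent_isHomogeneous N (c i)))).trans (if_pos rfl)]
            exact sub_self _
          · rw [hc i e (by omega),
              homogeneousComponent_of_mem ((mem_homogeneousSubmodule _ _).2
                (homogeneousComponent_isHomogeneous N (c i))), if_neg (by omega)]
            exact sub_self 0
        have h2 : ∀ j ∈ Finset.univ,
            homogeneousComponent e ((w2 i j - w2 j i) * Q j) = 0 := by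
          intro j _
          rw [sub_mul, map_sub, hw2Q i j j e he, hw2Q j i j e he, sub_self]
        rw [map_add, map_sub, map_sum, Finset.sum_congr rfl h2, Finset.sum_const_zero,
          add_zero, h1]
      have heq' : f = g + ∑ i, c' i * (P i - Q i) := by
        rw [heq]
        congr 1
        have hsplit : ∀ i ∈ Finset.univ, c' i * (P i - Q i)
            = c i * (P i - Q i) - E i * (P i - Q i)
              + (∑ j, (w2 i j - w2 j i) * Q j) * (P i - Q i) := by
          intro i _
          show ((c i - E i) + ∑ j, (w2 i j - w2 j i) * Q j) * (P i - Q i) = _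
          ring
        rw [Finset.sum_congr rfl hsplit, Finset.sum_add_distrib, Finset.sum_sub_distrib]
        have hL : ∑ i, E i * (P i - Q i) = - ∑ i, ∑ j, (w2 i j - w2 j i) * P j * Q i := by
          have h3 : ∀ i ∈ Finset.univ, E i * (P i - Q i)
              = E i * P i - (∑ j, (w2 i j - w2 j i) * P j) * Q i := by
            intro i _; rw [← hw2eq i]; ring
          rw [Finset.sum_congr rfl h3, Finset.sum_sub_distrib, hsyz, zero_sub]
          congr 1
          exact Finset.sum_congr rfl fun i _ => Finset.sum_mul _ _ _
        have hR : ∑ i, (∑ j, (w2 i j - w2 j i) * Q j) * (P i - Q i)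
            = (∑ i, ∑ j, (w2 i j - w2 j i) * Q j * P i)
              - ∑ i, ∑ j, (w2 i j - w2 j i) * Q j * Q i := by
          rw [← Finset.sum_sub_distrib]
          refine Finset.sum_congr rfl fun i _ => ?_
          rw [Finset.sum_mul, ← Finset.sum_sub_distrib]
          exact Finset.sum_congr rfl fun j _ => by ring
        rw [hR, antisym_sum_self, sub_zero, antisym_sum w2 Q P, ← hL]
        ring
      exact ih c' g hc' hg heq'
end StmtAux

open StmtAux

/-- The filtration `R⁽ᵈ⁾` of the quotient ring `R = k[x]/I`: `filt k n I (d+1)` is the image of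
the polynomials of (total) degree at most `d`, and `filt k n I 0 = 0` plays the role of
`R⁽⁻¹⁾ = 0`. -/
noncomputable def filt (k : Type) [Field k] (n : ℕ) (I : Ideal (MvPolynomial (Fin n) k)) :
    ℕ → Submodule k (MvPolynomial (Fin n) k ⧸ I)
  | 0 => ⊥
  | (d + 1) =>
      Submodule.map (Ideal.Quotient.mkₐ k I).toLinearMap (restrictTotalDegree (Fin n) k d)

/-- Lemma (surjectivity and kernel of `φ_d`): for a regular sequence `P` of homogeneous
polynomials of degree `p` and homogeneous polynomials `Q` of degree `q`, `p > q ≥ 1`,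
with `R = k[x]/(P - Q)`, the composite `φ_d : k[x]_d → R⁽ᵈ⁾/R⁽ᵈ⁻¹⁾` is surjective
(every element of `R⁽ᵈ⁾` is congruent modulo `R⁽ᵈ⁻¹⁾` to the image of a homogeneous
polynomial of degree `d`), and its kernel is `(P)_d` (for `f` homogeneous of degree `d`,
the image of `f` lies in `R⁽ᵈ⁻¹⁾` iff `f ∈ (P)`). -/
theorem stmt0 (k : Type) [Field k] (n l p q : ℕ) (hq : 1 ≤ q) (hpq : q < p)
    (P Q : Fin l → MvPolynomial (Fin n) k)
    (hP : ∀ i, (P i).IsHomogeneous p) (hQ : ∀ i, (Q i).IsHomogeneous q)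
    (hreg : ∀ i : Fin l, ∀ f : MvPolynomial (Fin n) k,
      f * P i ∈ Ideal.span (P '' {j | j < i}) → f ∈ Ideal.span (P '' {j | j < i}))
    (d : ℕ) :
    (∀ r ∈ filt k n (Ideal.span (Set.range fun i => P i - Q i)) (d + 1),
        ∃ f ∈ homogeneousSubmodule (Fin n) k d,
          r - Ideal.Quotient.mk (Ideal.span (Set.range fun i => P i - Q i)) f ∈
            filt k n (Ideal.span (Set.range fun i => P i - Q i)) d) ∧
    (∀ f ∈ homogeneousSubmodule (Fin n) k d,
        (Ideal.Quotient.mk (Ideal.span (Set.range fun i => P i - Q i)) f ∈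
            filt k n (Ideal.span (Set.range fun i => P i - Q i)) d ↔
          f ∈ Ideal.span (Set.range P))) := by
  set I := Ideal.span (Set.range fun i => P i - Q i) with hI
  have hfilt_succ : ∀ (m : ℕ) (r : MvPolynomial (Fin n) k ⧸ I),
      r ∈ filt k n I (m + 1) ↔ ∃ g : MvPolynomial (Fin n) k,
        g.totalDegree ≤ m ∧ Ideal.Quotient.mk I g = r := by
    intro m r
    show r ∈ Submodule.map _ _ ↔ _
    rw [Submodule.mem_map]
    constructor
    · rintro ⟨g, hg, rfl⟩
      exact ⟨g, (mem_restrictTotalDegree _ _ g).1 hg, rfl⟩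
    · rintro ⟨g, hg, rfl⟩
      exact ⟨g, (mem_restrictTotalDegree _ _ g).2 hg, rfl⟩
  constructor
  · -- surjectivity
    intro r hr
    rw [hfilt_succ d r] at hr
    obtain ⟨g, hgd, rfl⟩ := hr
    refine ⟨homogeneousComponent d g, (mem_homogeneousSubmodule _ _).2
      (homogeneousComponent_isHomogeneous d g), ?_⟩
    rw [← map_sub]
    have hsum : g = ∑ i ∈ Finset.range (d + 1), homogeneousComponent i g := by
      conv_lhs => rw [← sum_homogeneousComponent g]
      apply Finset.sum_subset (by intro x hx; simp only [Finset.mem_range] at *; omega)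
      intro x _ hx
      exact homogeneousComponent_eq_zero x g (by simp only [Finset.mem_range] at hx; omega)
    have hrest : g - homogeneousComponent d g
        = ∑ i ∈ Finset.range d, homogeneousComponent i g := by
      nth_rewrite 1 [hsum]
      rw [Finset.sum_range_succ]
      ring
    rcases d with _ | d'
    · have : g - homogeneousComponent 0 g = 0 := by
        rw [hrest]; simp
      rw [this, map_zero]
      exact zero_mem _
    · rw [hfilt_succ d' _]
      refine ⟨g - homogeneousComponent (d' + 1) g, ?_, rfl⟩
      rw [hrest]
      have hmem : (∑ i ∈ Finset.range (d' + 1), homogeneousComponent i g)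
          ∈ restrictTotalDegree (Fin n) k d' := by
        apply Submodule.sum_mem
        intro i hi
        rw [mem_restrictTotalDegree]
        exact le_trans (homogeneousComponent_isHomogeneous i g).totalDegree_le
          (by simp only [Finset.mem_range] at hi; omega)
      exact (mem_restrictTotalDegree _ _ _).1 hmem
  · -- kernel
    intro f hf
    have hf' : f.IsHomogeneous d := (mem_homogeneousSubmodule _ _).1 hf
    constructor
    · -- mk f ∈ filt d → f ∈ (P)
      intro hmem
      have hdesc : ∀ g : MvPolynomial (Fin n) k,
          (∀ e, d ≤ e → homogeneousComponent e g = 0) →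
          f - g ∈ I → f ∈ Ideal.span (Set.range P) := by
        intro g hg hfg
        rw [hI, Ideal.mem_span_range_iff_exists_fun] at hfg
        obtain ⟨c, hc⟩ := hfg
        set N : ℕ := (Finset.univ.sup fun i => (c i).totalDegree) + 1 with hN
        refine desc hq hpq P Q hP hQ hreg f hf' N c g ?_ hg ?_
        · intro i e he
          apply homogeneousComponent_eq_zero
          have h1 : (c i).totalDegree ≤ Finset.univ.sup fun i => (c i).totalDegree :=
            Finset.le_sup (f := fun i => (c i).totalDegree) (Finset.mem_univ i)
          omega
        · rw [hc]; ring
      rcases d with _ | d'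
      · have h0 : f ∈ I := by
          have : Ideal.Quotient.mk I f = 0 := by
            have hb : filt k n I 0 = ⊥ := rfl
            rw [hb] at hmem
            exact (Submodule.mem_bot _).1 hmem
          rwa [Ideal.Quotient.eq_zero_iff_mem] at this
        exact hdesc 0 (by intro e he; simp) (by simpa using h0)
      · rw [hfilt_succ d' _] at hmem
        obtain ⟨g, hgd, hgmk⟩ := hmem
        refine hdesc g ?_ ?_
        · intro e he
          exact homogeneousComponent_eq_zero e g (by omega)
        · rw [← Ideal.Quotient.eq]
          exact hgmk.symm
    · -- f ∈ (P) → mk f ∈ filt d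
      intro hsp
      rw [Ideal.mem_span_range_iff_exists_fun] at hsp
      obtain ⟨c, hc⟩ := hsp
      by_cases hdp : p ≤ d
      · set a : Fin l → MvPolynomial (Fin n) k :=
          fun i => homogeneousComponent (d - p) (c i) with ha
        have hfa : f = ∑ i, a i * P i := by
          have hcomp := congrArg (homogeneousComponent d) hc
          rw [map_sum, homogeneousComponent_of_mem hf, if_pos rfl] at hcomp
          rw [← hcomp]
          apply Finset.sum_congr rfl
          intro i _
          rw [comp_mul_homog (hP i), if_pos hdp]
        set g : MvPolynomial (Fin n) k := ∑ i, a i * Q i with hg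
        have hfg : Ideal.Quotient.mk I f = Ideal.Quotient.mk I g := by
          rw [Ideal.Quotient.eq]
          have : f - g = ∑ i, a i * (P i - Q i) := by
            rw [hfa, hg, ← Finset.sum_sub_distrib]
            exact Finset.sum_congr rfl fun i _ => by ring
          rw [this]
          exact Ideal.sum_mem _ fun i _ =>
            Ideal.mul_mem_left _ _ (Ideal.subset_span ⟨i, rfl⟩)
        obtain ⟨d', rfl⟩ : ∃ d', d = d' + 1 := ⟨d - 1, by omega⟩
        rw [hfilt_succ d' _]
        refine ⟨g, ?_, hfg.symm⟩
        have hmem : g ∈ restrictTotalDegree (Fin n) k d' := by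
          rw [hg]
          apply Submodule.sum_mem
          intro i _
          rw [mem_restrictTotalDegree]
          refine le_trans ((homogeneousComponent_isHomogeneous (d' + 1 - p) (c i)).mul
            (hQ i)).totalDegree_le ?_
          omega
        exact (mem_restrictTotalDegree _ _ _).1 hmem
      · have hf0 : f = 0 := by
          have hcomp := congrArg (homogeneousComponent d) hc
          rw [map_sum, homogeneousComponent_of_mem hf, if_pos rfl] at hcomp
          rw [← hcomp]
          apply Finset.sum_eq_zero
          intro i _
          rw [comp_mul_homog (hP i), if_neg hdp]
        rw [hf0, map_zero]
        exact zero_mem _
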